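/- Let q ≥ 2, a ≥ 1, integers k_1 ≥ k_2 ≥ … ≥ k_a ≥ 0 =: k_{a+1}, and vectors b_1,…,b_{k_1} ∈ ℤ_qⁿ that are linearly independent over ℤ_q (a ℤ_q-linear combination Σ c_i·b_i = 0 forces all c_i = 0), and let Λ_D be the associated Construction D set. Then |Λ_D ∩ [0,q^a)ⁿ| = q^{k_1 + k_2 + … + k_a}, and Λ_D is an additive subgroup of ℤⁿ of index [ℤⁿ : Λ_D] = q^{an − (k_1 + k_2 + … + k_a)}. -/

import Mathlib

open Finset

/-- The Construction D set associated to `q`, `a`, parameters `k` (with `k (a+1) = 0`)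
and vectors `b 1, …, b (k 1)` in `ℤ_qⁿ`. -/
def lambdaD (q a n : ℕ) (k : ℕ → ℕ) (b : ℕ → Fin n → ZMod q) : Set (Fin n → ℤ) :=
  {v | ∃ z : Fin n → ℤ, ∃ α : ℕ → ℕ → ℕ,
    (∀ s, 1 ≤ s → s ≤ a → ∀ i, k (s + 1) < i → i ≤ k s →
      α s i < addOrderOf (b i) * q ^ (s - 1)) ∧
    v = fun t => (q : ℤ) ^ a * z t
      + ∑ s ∈ Finset.Icc 1 a, ∑ i ∈ Finset.Ioc (k (s + 1)) (k s),
          (α s i : ℤ) * (q : ℤ) ^ (a - s) * (((b i) t).val : ℤ)}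

section Helpers

variable {q a n : ℕ} {k : ℕ → ℕ} {b : ℕ → Fin n → ZMod q}

/-- small integers divisible by a big modulus vanish -/
lemma dvd_small_eq_zero {m d : ℤ} (h : m ∣ d) (hd : |d| < m) : d = 0 := by
  rcases eq_or_ne d 0 with h0 | h0
  · exact h0
  · have h1 : m ∣ |d| := (dvd_abs m d).mpr h
    have h2 : m ≤ |d| := Int.le_of_dvd (abs_pos.mpr h0) h1
    omega

/-- antitonicity of `k` on `[1, a+1]` -/
lemma k_anti (hk : ∀ s, 1 ≤ s → s ≤ a → k (s + 1) ≤ k s) :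
    ∀ s t, 1 ≤ s → s ≤ t → t ≤ a + 1 → k t ≤ k s := by
  intro s t hs hst hta
  induction t with
  | zero => omega
  | succ t ih =>
    rcases eq_or_lt_of_le hst with h | h
    · rw [h]
    · have h1 : s ≤ t := by omega
      have h2 : k (t + 1) ≤ k t := hk t (by omega) (by omega)
      exact h2.trans (ih h1 (by omega))

/-- each vector has additive order exactly `q` -/
lemma order_eq (hq : 2 ≤ q)
    (hli : ∀ c : ℕ → ZMod q,
      (∑ i ∈ Finset.Icc 1 (k 1), c i • b i) = 0 → ∀ i ∈ Finset.Icc 1 (k 1), c i = 0) :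
    ∀ i ∈ Finset.Icc 1 (k 1), addOrderOf (b i) = q := by
  intro i hi
  have hq0 : q ≠ 0 := by omega
  have hqsmul : q • b i = 0 := by
    funext t
    simp [Pi.smul_apply, nsmul_eq_mul, ZMod.natCast_self]
  have hdvd : addOrderOf (b i) ∣ q := addOrderOf_dvd_of_nsmul_eq_zero hqsmul
  have hmin : ∀ m : ℕ, 0 < m → m < q → m • b i ≠ 0 := by
    intro m hm hmq hzero
    set c : ℕ → ZMod q := fun j => if j = i then (m : ZMod q) else 0 with hc
    have hsum : (∑ j ∈ Finset.Icc 1 (k 1), c j • b j) = 0 := by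
      rw [Finset.sum_eq_single i]
      · simp only [hc, if_pos rfl]
        rw [← hzero]
        funext t
        simp [nsmul_eq_mul]
      · intro j _ hj
        simp [hc, if_neg hj]
      · intro h; exact absurd hi h
    have := hli c hsum i hi
    simp only [hc, if_pos rfl] at this
    have : q ∣ m := (ZMod.natCast_eq_zero_iff m q).mp this
    have := Nat.le_of_dvd hm this
    omega
  have hpos : 0 < addOrderOf (b i) := by
    rcases Nat.eq_zero_or_pos (addOrderOf (b i)) with h | h
    · rw [h] at hdvd; simp at hdvd; omega
    · exact h
  have hle : addOrderOf (b i) ≤ q := Nat.le_of_dvd (by omega) hdvd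
  rcases eq_or_lt_of_le hle with h | h
  · exact h
  · exact absurd (addOrderOf_nsmul_eq_zero (b i)) (hmin _ hpos h)

/-- doubly-indexed linear independence -/
lemma hli' (hk : ∀ s, 1 ≤ s → s ≤ a → k (s + 1) ≤ k s)
    (hli : ∀ c : ℕ → ZMod q,
      (∑ i ∈ Finset.Icc 1 (k 1), c i • b i) = 0 → ∀ i ∈ Finset.Icc 1 (k 1), c i = 0)
    (T : Finset ℕ) (hT : T ⊆ Finset.Icc 1 a) (d : ℕ → ℕ → ZMod q)
    (h0 : ∑ s ∈ T, ∑ i ∈ Finset.Ioc (k (s + 1)) (k s), d s i • b i = 0) :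
    ∀ s ∈ T, ∀ i ∈ Finset.Ioc (k (s + 1)) (k s), d s i = 0 := by
  classical
  have hanti := k_anti hk
  set c : ℕ → ZMod q :=
    fun i => ∑ s ∈ T.filter (fun s => k (s + 1) < i ∧ i ≤ k s), d s i with hc
  have hfil : ∀ s ∈ T, ∀ i ∈ Finset.Ioc (k (s + 1)) (k s),
      T.filter (fun s' => k (s' + 1) < i ∧ i ≤ k s') = {s} := by
    intro s hsT i hio
    have hs := hT hsT
    rw [Finset.mem_Icc] at hs
    rw [Finset.mem_Ioc] at hio
    ext s'
    simp only [Finset.mem_filter, Finset.mem_singleton]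
    constructor
    · rintro ⟨hs'T, h1, h2⟩
      have hs' := hT hs'T
      rw [Finset.mem_Icc] at hs'
      by_contra hne
      rcases Nat.lt_or_ge s' s with hlt | hge
      · have : k s ≤ k (s' + 1) := hanti (s' + 1) s (by omega) (by omega) (by omega)
        omega
      · have hgt : s < s' := by omega
        have : k s' ≤ k (s + 1) := hanti (s + 1) s' (by omega) (by omega) (by omega)
        omega
    · rintro rfl
      exact ⟨hsT, hio.1, hio.2⟩
  have hsum : (∑ i ∈ Finset.Icc 1 (k 1), c i • b i)
      = ∑ s ∈ T, ∑ i ∈ Finset.Ioc (k (s + 1)) (k s), d s i • b i := by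
    have step1 : (∑ i ∈ Finset.Icc 1 (k 1), c i • b i)
        = ∑ i ∈ Finset.Icc 1 (k 1), ∑ s ∈ T,
            (if k (s + 1) < i ∧ i ≤ k s then d s i • b i else 0) := by
      refine Finset.sum_congr rfl fun i _ => ?_
      rw [hc, Finset.sum_smul, Finset.sum_filter]
    rw [step1, Finset.sum_comm]
    refine Finset.sum_congr rfl fun s hsT => ?_
    have hs := hT hsT
    rw [Finset.mem_Icc] at hs
    have hks : k s ≤ k 1 := hanti 1 s (by omega) (by omega) (by omega)
    rw [← Finset.sum_filter]
    refine Finset.sum_congr ?_ fun i _ => rfl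
    ext i
    simp only [Finset.mem_filter, Finset.mem_Icc, Finset.mem_Ioc]
    omega
  intro s hsT i hio
  have hi1 : i ∈ Finset.Icc 1 (k 1) := by
    have hs := hT hsT
    rw [Finset.mem_Icc] at hs
    have hks : k s ≤ k 1 := hanti 1 s (by omega) (by omega) (by omega)
    rw [Finset.mem_Ioc] at hio
    rw [Finset.mem_Icc]
    omega
  have hc0 := hli c (hsum.trans h0) i hi1
  have : (∑ s' ∈ ({s} : Finset ℕ), d s' i) = 0 := by
    rw [← hfil s hsT i hio]
    exact hc0
  simpa using this

/-- key divisibility lemma -/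
lemma key_dvd (hq : 2 ≤ q) (hk : ∀ s, 1 ≤ s → s ≤ a → k (s + 1) ≤ k s)
    (hli : ∀ c : ℕ → ZMod q,
      (∑ i ∈ Finset.Icc 1 (k 1), c i • b i) = 0 → ∀ i ∈ Finset.Icc 1 (k 1), c i = 0)
    (γ : ℕ → ℕ → ℤ)
    (hdvd : ∀ t : Fin n, (q : ℤ) ^ a ∣
      ∑ s ∈ Finset.Icc 1 a, ∑ i ∈ Finset.Ioc (k (s + 1)) (k s),
        γ s i * (q : ℤ) ^ (a - s) * (((b i) t).val : ℤ)) :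
    ∀ s ∈ Finset.Icc 1 a, ∀ i ∈ Finset.Ioc (k (s + 1)) (k s), (q : ℤ) ^ s ∣ γ s i := by
  classical
  have hq0 : (q : ℤ) ≠ 0 := by exact_mod_cast (by omega : q ≠ 0)
  have hNZ : NeZero q := ⟨by omega⟩
  suffices H : ∀ j, j ≤ a → ∀ s ∈ Finset.Icc 1 a, ∀ i ∈ Finset.Ioc (k (s + 1)) (k s),
      (q : ℤ) ^ (j - (a - s)) ∣ γ s i by
    intro s hs i hi
    have h := H a le_rfl s hs i hi
    rw [Finset.mem_Icc] at hs
    rwa [show a - (a - s) = s by omega] at h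
  intro j
  induction j with
  | zero => intro _ s _ i _; simp
  | succ j ih =>
    intro hja s₀ hs₀ i₀ hi₀
    have hih := ih (by omega)
    set T := (Finset.Icc 1 a).filter (fun s => a ≤ s + j) with hTdef
    set δ : ℕ → ℕ → ℤ := fun s i => γ s i / (q : ℤ) ^ (j - (a - s)) with hδ
    have hγδ : ∀ s ∈ Finset.Icc 1 a, ∀ i ∈ Finset.Ioc (k (s + 1)) (k s),
        γ s i = (q : ℤ) ^ (j - (a - s)) * δ s i := fun s hs i hi =>
      (Int.mul_ediv_cancel' (hih s hs i hi)).symm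
    have hstep : ∀ t : Fin n, (q : ℤ) ∣
        ∑ s ∈ T, ∑ i ∈ Finset.Ioc (k (s + 1)) (k s), δ s i * (((b i) t).val : ℤ) := by
      intro t
      have hsplit := Finset.sum_filter_add_sum_filter_not (Finset.Icc 1 a)
        (fun s => a ≤ s + j)
        (fun s => ∑ i ∈ Finset.Ioc (k (s + 1)) (k s),
          γ s i * (q : ℤ) ^ (a - s) * (((b i) t).val : ℤ))
      have hB : (q : ℤ) ^ (j + 1) ∣
          ∑ s ∈ (Finset.Icc 1 a).filter (fun s => ¬ a ≤ s + j),
            ∑ i ∈ Finset.Ioc (k (s + 1)) (k s),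
              γ s i * (q : ℤ) ^ (a - s) * (((b i) t).val : ℤ) := by
        refine Finset.dvd_sum fun s hs => Finset.dvd_sum fun i hi => ?_
        rw [Finset.mem_filter] at hs
        have h1 : (q : ℤ) ^ (j + 1) ∣ (q : ℤ) ^ (a - s) := pow_dvd_pow _ (by omega)
        exact (h1.mul_left (γ s i)).mul_right _
      have htot : (q : ℤ) ^ (j + 1) ∣
          ∑ s ∈ Finset.Icc 1 a, ∑ i ∈ Finset.Ioc (k (s + 1)) (k s),
            γ s i * (q : ℤ) ^ (a - s) * (((b i) t).val : ℤ) :=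
        (pow_dvd_pow _ (by omega : j + 1 ≤ a)).trans (hdvd t)
      rw [← hsplit] at htot
      have hA := htot.sub hB
      rw [add_sub_cancel_right] at hA
      have hAeq : (∑ s ∈ T, ∑ i ∈ Finset.Ioc (k (s + 1)) (k s),
            γ s i * (q : ℤ) ^ (a - s) * (((b i) t).val : ℤ))
          = (q : ℤ) ^ j * ∑ s ∈ T, ∑ i ∈ Finset.Ioc (k (s + 1)) (k s),
              δ s i * (((b i) t).val : ℤ) := by
        rw [Finset.mul_sum]
        refine Finset.sum_congr rfl fun s hs => ?_
        rw [Finset.mul_sum]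
        refine Finset.sum_congr rfl fun i hi => ?_
        rw [Finset.mem_filter, Finset.mem_Icc] at hs
        rw [hγδ s (Finset.mem_Icc.mpr hs.1) i hi]
        have hpows : (q : ℤ) ^ (j - (a - s)) * (q : ℤ) ^ (a - s) = (q : ℤ) ^ j := by
          rw [← pow_add]; congr 1; omega
        linear_combination (δ s i * (((b i) t).val : ℤ)) * hpows
      rw [hAeq, pow_succ] at hA
      exact (mul_dvd_mul_iff_left (pow_ne_zero j hq0)).mp hA
    have hzero : ∑ s ∈ T, ∑ i ∈ Finset.Ioc (k (s + 1)) (k s),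
        (((δ s i : ℤ) : ZMod q)) • b i = 0 := by
      funext t
      have h := hstep t
      have hcast : ((∑ s ∈ T, ∑ i ∈ Finset.Ioc (k (s + 1)) (k s),
          δ s i * (((b i) t).val : ℤ) : ℤ) : ZMod q) = 0 :=
        (ZMod.intCast_zmod_eq_zero_iff_dvd _ q).mpr h
      push_cast at hcast
      simp only [ZMod.natCast_val, ZMod.cast_id] at hcast
      simp only [Finset.sum_apply, Pi.smul_apply, smul_eq_mul, Pi.zero_apply]
      exact hcast
    have hDdvd : ∀ s ∈ T, ∀ i ∈ Finset.Ioc (k (s + 1)) (k s), (q : ℤ) ∣ δ s i := by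
      intro s hs i hi
      have := hli' hk hli T (Finset.filter_subset _ _)
        (fun s i => ((δ s i : ℤ) : ZMod q)) hzero s hs i hi
      exact_mod_cast (ZMod.intCast_zmod_eq_zero_iff_dvd _ q).mp this
    rcases le_or_gt a (s₀ + j) with hcase | hcase
    · have hs₀T : s₀ ∈ T := Finset.mem_filter.mpr ⟨hs₀, hcase⟩
      obtain ⟨e, he⟩ := hDdvd s₀ hs₀T i₀ hi₀
      refine ⟨e, ?_⟩
      rw [Finset.mem_Icc] at hs₀
      rw [hγδ s₀ (Finset.mem_Icc.mpr hs₀) i₀ hi₀, he,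
        show j + 1 - (a - s₀) = (j - (a - s₀)) + 1 by omega, pow_succ]
      ring
    · rw [show j + 1 - (a - s₀) = 0 by omega, pow_zero]
      exact one_dvd _

/-- Abel summation -/
lemma abel_sum (k : ℕ → ℕ) : ∀ a : ℕ, (∀ s, 1 ≤ s → s ≤ a → k (s + 1) ≤ k s) →
    (∑ s ∈ Finset.Icc 1 a, s * (k s - k (s + 1))) + a * k (a + 1)
      = ∑ ℓ ∈ Finset.Icc 1 a, k ℓ := by
  intro a
  induction a with
  | zero => simp
  | succ m ih =>
    intro h
    rw [Finset.sum_Icc_succ_top (by omega : 1 ≤ m + 1),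
        Finset.sum_Icc_succ_top (by omega : 1 ≤ m + 1)]
    have h1 : k (m + 2) ≤ k (m + 1) := h (m + 1) (by omega) (by omega)
    have h2 := ih (fun s hs hs' => h s hs (by omega))
    have e : (m + 1) * (k (m + 1) - k (m + 2)) + (m + 1) * k (m + 2)
        = (m + 1) * k (m + 1) := by rw [← Nat.mul_add]; congr 1; omega
    have hsm : (m + 1) * k (m + 1) = m * k (m + 1) + k (m + 1) := by ring
    simp only [show m + 1 + 1 = m + 2 from rfl]
    omega

end Helpers


section Main

variable {q a n : ℕ} {k : ℕ → ℕ} {b : ℕ → Fin n → ZMod q}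

/-- the parametrizing additive hom -/
def fmap (q a n : ℕ) (k : ℕ → ℕ) (b : ℕ → Fin n → ZMod q) :
    (Fin n → ℤ) × (ℕ → ℕ → ℤ) →+ (Fin n → ℤ) where
  toFun p := fun t => (q : ℤ) ^ a * p.1 t
      + ∑ s ∈ Finset.Icc 1 a, ∑ i ∈ Finset.Ioc (k (s + 1)) (k s),
          p.2 s i * (q : ℤ) ^ (a - s) * (((b i) t).val : ℤ)
  map_zero' := by funext t; simp
  map_add' p p' := by
    funext t
    simp only [Prod.fst_add, Prod.snd_add, Pi.add_apply, add_mul, mul_add,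
      Finset.sum_add_distrib]
    ring

lemma hcb_eq (hq : 2 ≤ q)
    (hk : ∀ s, 1 ≤ s → s ≤ a → k (s + 1) ≤ k s)
    (hli : ∀ c : ℕ → ZMod q,
      (∑ i ∈ Finset.Icc 1 (k 1), c i • b i) = 0 → ∀ i ∈ Finset.Icc 1 (k 1), c i = 0) :
    ∀ s i, 1 ≤ s → s ≤ a → k (s + 1) < i → i ≤ k s →
      addOrderOf (b i) * q ^ (s - 1) = q ^ s := by
  intro s i hs1 hsa hi1 hi2
  have hanti := k_anti hk
  have him : i ∈ Finset.Icc 1 (k 1) := by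
    rw [Finset.mem_Icc]
    have : k s ≤ k 1 := hanti 1 s (by omega) (by omega) (by omega)
    omega
  rw [order_eq hq hli i him]
  have h1 : q ^ s = q ^ (s - 1 + 1) := by congr 1; omega
  rw [h1, pow_succ]
  ring

lemma lambdaD_eq_range (hq : 2 ≤ q)
    (hk : ∀ s, 1 ≤ s → s ≤ a → k (s + 1) ≤ k s)
    (hli : ∀ c : ℕ → ZMod q,
      (∑ i ∈ Finset.Icc 1 (k 1), c i • b i) = 0 → ∀ i ∈ Finset.Icc 1 (k 1), c i = 0) :
    ((fmap q a n k b).range : Set (Fin n → ℤ)) = lambdaD q a n k b := by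
  have hq0 : (q : ℤ) ≠ 0 := by exact_mod_cast (by omega : q ≠ 0)
  have hcb := hcb_eq hq hk hli
  ext v
  simp only [SetLike.mem_coe, AddMonoidHom.mem_range]
  constructor
  · rintro ⟨⟨z, α⟩, rfl⟩
    refine ⟨fun t => z t + ∑ s ∈ Finset.Icc 1 a, ∑ i ∈ Finset.Ioc (k (s + 1)) (k s),
        (α s i / (q : ℤ) ^ s) * (((b i) t).val : ℤ),
      fun s i => (α s i % (q : ℤ) ^ s).toNat, ?_, ?_⟩
    · intro s hs1 hsa i hi1 hi2
      rw [hcb s i hs1 hsa hi1 hi2]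
      have hqs : (0 : ℤ) < (q : ℤ) ^ s := by positivity
      have h1 : 0 ≤ α s i % (q : ℤ) ^ s := Int.emod_nonneg _ (by positivity)
      have h2 : α s i % (q : ℤ) ^ s < (q : ℤ) ^ s := Int.emod_lt_of_pos _ hqs
      have h3 : ((q ^ s : ℕ) : ℤ) = (q : ℤ) ^ s := by push_cast; ring
      show (α s i % (q : ℤ) ^ s).toNat < q ^ s
      omega
    · show fmap q a n k b (z, α) = _
      funext t
      show (q : ℤ) ^ a * z t + _ = _
      have hterm : ∀ s ∈ Finset.Icc 1 a, ∀ i ∈ Finset.Ioc (k (s + 1)) (k s),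
          α s i * (q : ℤ) ^ (a - s) * (((b i) t).val : ℤ)
            = (q : ℤ) ^ a * ((α s i / (q : ℤ) ^ s) * (((b i) t).val : ℤ))
              + (((α s i % (q : ℤ) ^ s).toNat : ℤ)) * (q : ℤ) ^ (a - s)
                * (((b i) t).val : ℤ) := by
        intro s hs i hi
        rw [Finset.mem_Icc] at hs
        have hqs : (0 : ℤ) < (q : ℤ) ^ s := by positivity
        rw [Int.toNat_of_nonneg (Int.emod_nonneg _ (by positivity))]
        have h2 := Int.mul_ediv_add_emod (α s i) ((q : ℤ) ^ s)
        have hpow : (q : ℤ) ^ s * (q : ℤ) ^ (a - s) = (q : ℤ) ^ a := by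
          rw [← pow_add]; congr 1; omega
        linear_combination (-(((b i) t).val : ℤ) * (q : ℤ) ^ (a - s)) * h2
          + ((α s i / (q : ℤ) ^ s) * (((b i) t).val : ℤ)) * hpow
      rw [Finset.sum_congr rfl (fun s hs => Finset.sum_congr rfl (fun i hi => hterm s hs i hi))]
      simp only [Finset.sum_add_distrib, ← Finset.mul_sum]
      ring
  · rintro ⟨z, α, hbound, rfl⟩
    exact ⟨(z, fun s i => (α s i : ℤ)), rfl⟩

lemma count_box (hq : 2 ≤ q) (ha : 1 ≤ a)
    (hk : ∀ s, 1 ≤ s → s ≤ a → k (s + 1) ≤ k s) (hka : k (a + 1) = 0)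
    (hli : ∀ c : ℕ → ZMod q,
      (∑ i ∈ Finset.Icc 1 (k 1), c i • b i) = 0 → ∀ i ∈ Finset.Icc 1 (k 1), c i = 0) :
    Set.ncard (lambdaD q a n k b ∩ {v : Fin n → ℤ | ∀ t, 0 ≤ v t ∧ v t < (q : ℤ) ^ a})
      = q ^ (∑ ℓ ∈ Finset.Icc 1 a, k ℓ) := by
  classical
  have hanti := k_anti hk
  have hcb := hcb_eq hq hk hli
  have hq0 : (q : ℤ) ≠ 0 := by exact_mod_cast (by omega : q ≠ 0)
  have hqa : (0 : ℤ) < (q : ℤ) ^ a := by positivity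
  set I : Finset ((_ : ℕ) × ℕ) :=
    (Finset.Icc 1 a).sigma (fun s => Finset.Ioc (k (s + 1)) (k s)) with hI
  set A : Finset (ℕ → ℕ → ℕ) :=
    (I.pi (fun p => Finset.range (q ^ p.1))).image
      (fun f s i => if h : (⟨s, i⟩ : (_ : ℕ) × ℕ) ∈ I then f ⟨s, i⟩ h else 0) with hA
  have memA : ∀ α : ℕ → ℕ → ℕ, α ∈ A ↔
      ((∀ p : (_ : ℕ) × ℕ, p ∈ I → α p.1 p.2 < q ^ p.1) ∧
       (∀ p : (_ : ℕ) × ℕ, p ∉ I → α p.1 p.2 = 0)) := by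
    intro α
    constructor
    · intro hα
      rw [hA, Finset.mem_image] at hα
      obtain ⟨f, hf, rfl⟩ := hα
      rw [Finset.mem_pi] at hf
      constructor
      · intro p hp
        have h1 := hf p hp
        rw [Finset.mem_range] at h1
        show (if h : (⟨p.1, p.2⟩ : (_ : ℕ) × ℕ) ∈ I then f ⟨p.1, p.2⟩ h else 0) < q ^ p.1
        rw [dif_pos hp]
        exact h1
      · intro p hp
        show (if h : (⟨p.1, p.2⟩ : (_ : ℕ) × ℕ) ∈ I then f ⟨p.1, p.2⟩ h else 0) = 0
        rw [dif_neg hp]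
    · rintro ⟨h1, h2⟩
      rw [hA, Finset.mem_image]
      refine ⟨fun p _ => α p.1 p.2, ?_, ?_⟩
      · rw [Finset.mem_pi]
        intro p hp
        rw [Finset.mem_range]
        exact h1 p hp
      · funext s i
        by_cases h : (⟨s, i⟩ : (_ : ℕ) × ℕ) ∈ I
        · simp only [dif_pos h]
        · simp only [dif_neg h]
          exact (h2 ⟨s, i⟩ h).symm
  have cardA : A.card = q ^ (∑ ℓ ∈ Finset.Icc 1 a, k ℓ) := by
    have hinj : Set.InjOn
        (fun (f : (p : (_ : ℕ) × ℕ) → p ∈ I → ℕ) (s i : ℕ) =>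
          if h : (⟨s, i⟩ : (_ : ℕ) × ℕ) ∈ I then f ⟨s, i⟩ h else 0)
        ↑(I.pi (fun p => Finset.range (q ^ p.1))) := by
      intro f hf g hg hfg
      funext p hp
      have := congrFun (congrFun hfg p.1) p.2
      simpa [dif_pos hp] using this
    rw [hA, Finset.card_image_of_injOn hinj, Finset.card_pi]
    simp only [Finset.card_range]
    rw [Finset.prod_pow_eq_pow_sum]
    congr 1
    rw [hI, Finset.sum_sigma]
    have hinner : ∀ s ∈ Finset.Icc 1 a,
        (∑ _i ∈ Finset.Ioc (k (s + 1)) (k s), s) = s * (k s - k (s + 1)) := by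
      intro s _
      rw [Finset.sum_const, Nat.card_Ioc, smul_eq_mul, mul_comm]
    rw [Finset.sum_congr rfl hinner]
    have habel := abel_sum k a hk
    rw [hka, Nat.mul_zero, Nat.add_zero] at habel
    exact habel
  set x : (ℕ → ℕ → ℕ) → (Fin n → ℤ) → Fin n → ℤ := fun α _z t =>
    ∑ s ∈ Finset.Icc 1 a, ∑ i ∈ Finset.Ioc (k (s + 1)) (k s),
      (α s i : ℤ) * (q : ℤ) ^ (a - s) * (((b i) t).val : ℤ) with hx
  set Φ : (ℕ → ℕ → ℕ) → (Fin n → ℤ) := fun α t =>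
    (∑ s ∈ Finset.Icc 1 a, ∑ i ∈ Finset.Ioc (k (s + 1)) (k s),
      (α s i : ℤ) * (q : ℤ) ^ (a - s) * (((b i) t).val : ℤ)) % (q : ℤ) ^ a with hΦ
  have hmemI : ∀ s i, 1 ≤ s → s ≤ a → k (s + 1) < i → i ≤ k s →
      (⟨s, i⟩ : (_ : ℕ) × ℕ) ∈ I := by
    intro s i h1 h2 h3 h4
    rw [hI, Finset.mem_sigma, Finset.mem_Icc, Finset.mem_Ioc]
    exact ⟨⟨h1, h2⟩, h3, h4⟩
  have himg : lambdaD q a n k b ∩ {v : Fin n → ℤ | ∀ t, 0 ≤ v t ∧ v t < (q : ℤ) ^ a}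
      = Φ '' ↑A := by
    ext v
    constructor
    · rintro ⟨⟨z, α, hbound, rfl⟩, hbox⟩
      refine ⟨fun s i => if (⟨s, i⟩ : (_ : ℕ) × ℕ) ∈ I then α s i else 0, ?_, ?_⟩
      · rw [Finset.mem_coe]
        apply (memA _).mpr
        constructor
        · intro p hp
          show (if (⟨p.1, p.2⟩ : (_ : ℕ) × ℕ) ∈ I then α p.1 p.2 else 0) < q ^ p.1
          rw [if_pos hp]
          have hp' := hp
          rw [hI, Finset.mem_sigma, Finset.mem_Icc, Finset.mem_Ioc] at hp'
          have := hbound p.1 hp'.1.1 hp'.1.2 p.2 hp'.2.1 hp'.2.2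
          rwa [hcb p.1 p.2 hp'.1.1 hp'.1.2 hp'.2.1 hp'.2.2] at this
        · intro p hp
          show (if (⟨p.1, p.2⟩ : (_ : ℕ) × ℕ) ∈ I then α p.1 p.2 else 0) = 0
          rw [if_neg hp]
      · funext t
        rw [hΦ]
        show (∑ s ∈ Finset.Icc 1 a, ∑ i ∈ Finset.Ioc (k (s + 1)) (k s),
            (((if (⟨s, i⟩ : (_ : ℕ) × ℕ) ∈ I then α s i else 0) : ℕ) : ℤ)
              * (q : ℤ) ^ (a - s) * (((b i) t).val : ℤ)) % (q : ℤ) ^ a = _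
        have hxeq : (∑ s ∈ Finset.Icc 1 a, ∑ i ∈ Finset.Ioc (k (s + 1)) (k s),
            (((if (⟨s, i⟩ : (_ : ℕ) × ℕ) ∈ I then α s i else 0) : ℕ) : ℤ)
              * (q : ℤ) ^ (a - s) * (((b i) t).val : ℤ))
            = ∑ s ∈ Finset.Icc 1 a, ∑ i ∈ Finset.Ioc (k (s + 1)) (k s),
              ((α s i : ℕ) : ℤ) * (q : ℤ) ^ (a - s) * (((b i) t).val : ℤ) := by
          refine Finset.sum_congr rfl fun s hs => Finset.sum_congr rfl fun i hi => ?_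
          rw [Finset.mem_Icc] at hs
          rw [Finset.mem_Ioc] at hi
          rw [if_pos (hmemI s i hs.1 hs.2 hi.1 hi.2)]
        rw [hxeq]
        have hbt := hbox t
        simp only [Set.mem_setOf_eq] at hbt
        show _ = (q : ℤ) ^ a * z t + ∑ s ∈ Finset.Icc 1 a,
            ∑ i ∈ Finset.Ioc (k (s + 1)) (k s),
              (α s i : ℤ) * (q : ℤ) ^ (a - s) * (((b i) t).val : ℤ)
        have hstep : (∑ s ∈ Finset.Icc 1 a, ∑ i ∈ Finset.Ioc (k (s + 1)) (k s),
            (α s i : ℤ) * (q : ℤ) ^ (a - s) * (((b i) t).val : ℤ)) % (q : ℤ) ^ a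
            = ((q : ℤ) ^ a * z t + ∑ s ∈ Finset.Icc 1 a,
                ∑ i ∈ Finset.Ioc (k (s + 1)) (k s),
                  (α s i : ℤ) * (q : ℤ) ^ (a - s) * (((b i) t).val : ℤ)) % (q : ℤ) ^ a := by
          rw [add_comm, Int.add_mul_emod_self_left]
        rw [hstep]
        exact Int.emod_eq_of_lt hbt.1 hbt.2
    · rintro ⟨α, hαA, rfl⟩
      have hmem := (memA α).mp (by exact_mod_cast hαA)
      constructor
      · refine ⟨fun t => -((∑ s ∈ Finset.Icc 1 a, ∑ i ∈ Finset.Ioc (k (s + 1)) (k s),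
            (α s i : ℤ) * (q : ℤ) ^ (a - s) * (((b i) t).val : ℤ)) / (q : ℤ) ^ a),
          α, ?_, ?_⟩
        · intro s hs1 hsa i hi1 hi2
          rw [hcb s i hs1 hsa hi1 hi2]
          exact hmem.1 ⟨s, i⟩ (hmemI s i hs1 hsa hi1 hi2)
        · funext t
          rw [hΦ]
          show _ % (q : ℤ) ^ a = _
          rw [Int.emod_def]
          ring
      · intro t
        exact ⟨Int.emod_nonneg _ (by positivity), Int.emod_lt_of_pos _ hqa⟩
  have hinjΦ : Set.InjOn Φ ↑A := by
    intro α hα β hβ h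
    have hα' := (memA α).mp (by exact_mod_cast hα)
    have hβ' := (memA β).mp (by exact_mod_cast hβ)
    have hdvd : ∀ t : Fin n, (q : ℤ) ^ a ∣
        ∑ s ∈ Finset.Icc 1 a, ∑ i ∈ Finset.Ioc (k (s + 1)) (k s),
          ((α s i : ℤ) - (β s i : ℤ)) * (q : ℤ) ^ (a - s) * (((b i) t).val : ℤ) := by
      intro t
      have ht := congrFun h t
      rw [hΦ] at ht
      have hsub : (∑ s ∈ Finset.Icc 1 a, ∑ i ∈ Finset.Ioc (k (s + 1)) (k s),
            (α s i : ℤ) * (q : ℤ) ^ (a - s) * (((b i) t).val : ℤ))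
          - (∑ s ∈ Finset.Icc 1 a, ∑ i ∈ Finset.Ioc (k (s + 1)) (k s),
            (β s i : ℤ) * (q : ℤ) ^ (a - s) * (((b i) t).val : ℤ))
          = ∑ s ∈ Finset.Icc 1 a, ∑ i ∈ Finset.Ioc (k (s + 1)) (k s),
            ((α s i : ℤ) - (β s i : ℤ)) * (q : ℤ) ^ (a - s)
              * (((b i) t).val : ℤ) := by
        rw [← Finset.sum_sub_distrib]
        refine Finset.sum_congr rfl fun s _ => ?_
        rw [← Finset.sum_sub_distrib]
        refine Finset.sum_congr rfl fun i _ => ?_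
        ring
      rw [← hsub]
      exact Int.dvd_of_emod_eq_zero (Int.emod_emod_of_dvd _ dvd_rfl ▸
        (Int.emod_eq_emod_iff_emod_sub_eq_zero.mp ht))
    have hkey := key_dvd hq hk hli (fun s i => (α s i : ℤ) - (β s i : ℤ)) hdvd
    funext s i
    by_cases hp : (⟨s, i⟩ : (_ : ℕ) × ℕ) ∈ I
    · have h1 := hα'.1 ⟨s, i⟩ hp
      have h2 := hβ'.1 ⟨s, i⟩ hp
      have hp' := hp
      rw [hI, Finset.mem_sigma, Finset.mem_Icc, Finset.mem_Ioc] at hp'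
      have hd := hkey s (Finset.mem_Icc.mpr hp'.1) i (Finset.mem_Ioc.mpr hp'.2)
      have hcast : ((q ^ s : ℕ) : ℤ) = (q : ℤ) ^ s := by push_cast; ring
      dsimp only at h1 h2 hd
      have hz : (α s i : ℤ) - (β s i : ℤ) = 0 := by
        refine dvd_small_eq_zero hd ?_
        rw [abs_lt]
        constructor <;> omega
      omega
    · rw [hα'.2 ⟨s, i⟩ hp, hβ'.2 ⟨s, i⟩ hp]
  rw [himg, Set.ncard_image_of_injOn hinjΦ, Set.ncard_coe_finset, cardA]

end Main

/-- If `b 1, …, b (k 1)` are linearly independent over `ℤ_q`, then the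
Construction D set has exactly `q^{k_1 + ⋯ + k_a}` points in `[0, q^a)ⁿ`, and it is an
additive subgroup of `ℤⁿ` of index `q^{an - (k_1 + ⋯ + k_a)}`. -/
theorem card_lambdaD_box_of_linearIndependent
    (q a n : ℕ) (hq : 2 ≤ q) (ha : 1 ≤ a)
    (k : ℕ → ℕ) (hk : ∀ s, 1 ≤ s → s ≤ a → k (s + 1) ≤ k s) (hka : k (a + 1) = 0)
    (b : ℕ → Fin n → ZMod q)
    (hli : ∀ c : ℕ → ZMod q,
      (∑ i ∈ Finset.Icc 1 (k 1), c i • b i) = 0 → ∀ i ∈ Finset.Icc 1 (k 1), c i = 0) :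
    Set.ncard (lambdaD q a n k b ∩ {v : Fin n → ℤ | ∀ t, 0 ≤ v t ∧ v t < (q : ℤ) ^ a})
      = q ^ (∑ ℓ ∈ Finset.Icc 1 a, k ℓ) ∧
    ∃ G : AddSubgroup (Fin n → ℤ), (G : Set (Fin n → ℤ)) = lambdaD q a n k b ∧
      G.index = q ^ (a * n - ∑ ℓ ∈ Finset.Icc 1 a, k ℓ) := by
  classical
  have hq0 : (q : ℤ) ≠ 0 := by exact_mod_cast (by omega : q ≠ 0)
  have hqa : (0 : ℤ) < (q : ℤ) ^ a := by positivity
  set S := ∑ ℓ ∈ Finset.Icc 1 a, k ℓ with hS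
  have hqne : q ≠ 0 := by omega
  have hqunit : ¬ IsUnit q := by simp only [Nat.isUnit_iff]; omega
  have hqS : 0 < q ^ S := pow_pos (by omega) S
  have hcnt := count_box (b := b) hq ha hk hka hli
  have hrange := lambdaD_eq_range (a := a) (n := n) (k := k) (b := b) hq hk hli
  refine ⟨hcnt, (fmap q a n k b).range, hrange, ?_⟩
  set G := (fmap q a n k b).range with hG
  set H : AddSubgroup (Fin n → ℤ) :=
    AddSubgroup.pi Set.univ (fun _ => AddSubgroup.zmultiples ((q : ℤ) ^ a)) with hH
  have hHmem : ∀ v : Fin n → ℤ, v ∈ H ↔ ∀ t, (q : ℤ) ^ a ∣ v t := by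
    intro v
    rw [hH, AddSubgroup.mem_pi]
    constructor
    · intro h t
      exact Int.mem_zmultiples_iff.mp (h t (Set.mem_univ t))
    · intro h t _
      exact Int.mem_zmultiples_iff.mpr (h t)
  have hHG : H ≤ G := by
    intro v hv
    refine ⟨(fun t => v t / (q : ℤ) ^ a, 0), ?_⟩
    funext t
    show (q : ℤ) ^ a * (v t / (q : ℤ) ^ a) + _ = v t
    rw [Int.mul_ediv_cancel' ((hHmem v).mp hv t)]
    simp
  have hHidx : H.index = q ^ (a * n) := by
    rw [hH, AddSubgroup.index_pi]
    simp only [Int.index_zmultiples, Int.natAbs_pow, Int.natAbs_natCast]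
    rw [Finset.prod_const, Finset.card_univ, Fintype.card_fin, ← pow_mul]
  have hcardB : Nat.card ((G : Set (Fin n → ℤ)) ∩
      {v : Fin n → ℤ | ∀ t, 0 ≤ v t ∧ v t < (q : ℤ) ^ a} : Set (Fin n → ℤ)) = q ^ S := by
    rw [Nat.card_coe_set_eq, hrange]
    exact hcnt
  have hrel : H.relIndex G = q ^ S := by
    have e : ((G : Set (Fin n → ℤ)) ∩
        {v : Fin n → ℤ | ∀ t, 0 ≤ v t ∧ v t < (q : ℤ) ^ a} : Set (Fin n → ℤ)) ≃
        (↥G ⧸ H.addSubgroupOf G) := by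
      refine Equiv.ofBijective (fun v => QuotientAddGroup.mk ⟨v.1, v.2.1⟩) ⟨?_, ?_⟩
      · rintro ⟨vv, hvG, hvbox⟩ ⟨ww, hwG, hwbox⟩ h
        rw [QuotientAddGroup.eq, AddSubgroup.mem_addSubgroupOf] at h
        have hd : ∀ t, (q : ℤ) ^ a ∣ (-vv t + ww t) := by
          intro t
          have := (hHmem _).mp h t
          simpa using this
        apply Subtype.ext
        funext t
        have h1 := hvbox t
        have h2 := hwbox t
        have hz : -vv t + ww t = 0 := by
          refine dvd_small_eq_zero (hd t) ?_
          rw [abs_lt]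
          exact ⟨by linarith [h1.1, h2.1, h1.2, h2.2], by linarith [h1.1, h2.1, h1.2, h2.2]⟩
        show vv t = ww t
        linarith [hz]
      · intro x
        obtain ⟨g, rfl⟩ := QuotientAddGroup.mk_surjective x
        have hdiff : (fun t => g.1 t - g.1 t % (q : ℤ) ^ a) ∈ H := by
          rw [hHmem]
          intro t
          exact ⟨g.1 t / (q : ℤ) ^ a, by rw [Int.emod_def]; ring⟩
        have hv'G : (fun t => g.1 t % (q : ℤ) ^ a) ∈ G := by
          have hsub := G.sub_mem g.2 (hHG hdiff)
          have : g.1 - (fun t => g.1 t - g.1 t % (q : ℤ) ^ a)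
              = fun t => g.1 t % (q : ℤ) ^ a := by
            funext t
            simp [Pi.sub_apply]
          rwa [this] at hsub
        have hbox : ∀ t, 0 ≤ g.1 t % (q : ℤ) ^ a ∧ g.1 t % (q : ℤ) ^ a < (q : ℤ) ^ a :=
          fun t => ⟨Int.emod_nonneg _ (by positivity), Int.emod_lt_of_pos _ hqa⟩
        refine ⟨⟨fun t => g.1 t % (q : ℤ) ^ a, hv'G, hbox⟩, ?_⟩
        rw [QuotientAddGroup.eq, AddSubgroup.mem_addSubgroupOf]
        rw [hHmem]
        intro t
        refine ⟨g.1 t / (q : ℤ) ^ a, ?_⟩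
        show -((fun t => g.1 t % (q : ℤ) ^ a) t) + g.1 t = _
        simp only []
        rw [Int.emod_def]
        ring
    have : H.relIndex G = Nat.card (↥G ⧸ H.addSubgroupOf G) := rfl
    rw [this, ← Nat.card_congr e, hcardB]
  have hmul := AddSubgroup.relIndex_mul_index hHG
  rw [hrel, hHidx] at hmul
  have hSle : S ≤ a * n := by
    have hd : q ^ S ∣ q ^ (a * n) := ⟨(fmap q a n k b).range.index, hmul.symm⟩
    exact (pow_dvd_pow_iff hqne hqunit).mp hd
  have hfin : q ^ S * G.index = q ^ S * q ^ (a * n - S) := by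
    rw [hmul, ← pow_add, Nat.add_sub_cancel' hSle]
  exact Nat.eq_of_mul_eq_mul_left hqS hfin
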